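/- Let X be an infinite-dimensional Banach space over 𝕂 (= ℝ or ℂ), n ∈ ℕ, ε > 0, and φ₁, …, φ_n ∈ X* nonzero continuous linear functionals, and set A = {x ∈ X : |φ_i(x)| < ε for all i}. Then A is (α, dim X)-spaceable in X for every cardinal α < dim X: the subspace N = ⋂_{i=1}^n ker(φ_i) is closed, is contained in A, has dimension (linear rank) equal to dim X, and every linear subspace W_α ⊆ A with dim W_α = α < dim X is contained in N. -/

import Mathlib

/-- The basic weak neighborhood `A = {x : |φ_i(x)| < ε, i = 1, …, n}` is
`(α, dim X)`-spaceable for every `α < dim X`: the subspace `N = ⋂ᵢ ker φᵢ` is closed,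
contained in `A`, has full dimension `dim X`, and every subspace `W ⊆ A` with
`dim W < dim X` is contained in `N`. -/
theorem weak_nbhd_alpha_dim_spaceable
    {𝕂 X : Type*} [RCLike 𝕂] [NormedAddCommGroup X] [NormedSpace 𝕂 X] [CompleteSpace X]
    (hinf : ¬ FiniteDimensional 𝕂 X)
    (n : ℕ) (hn : 0 < n) (ε : ℝ) (hε : 0 < ε)
    (φ : Fin n → X →L[𝕂] 𝕂) (hφ : ∀ i, φ i ≠ 0)
    (A : Set X) (hA : A = {x : X | ∀ i, ‖φ i x‖ < ε})
    (N : Submodule 𝕂 X) (hN : N = ⨅ i, LinearMap.ker (φ i : X →ₗ[𝕂] 𝕂)) :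
    IsClosed (N : Set X) ∧
    (N : Set X) ⊆ A ∧
    Module.rank 𝕂 ↥N = Module.rank 𝕂 X ∧
    (∀ W : Submodule 𝕂 X, (W : Set X) ⊆ A →
      Module.rank 𝕂 ↥W < Module.rank 𝕂 X → W ≤ N) := by
  have hmemN : ∀ x, x ∈ N ↔ ∀ i, φ i x = 0 := by
    intro x
    simp [hN, Submodule.mem_iInf, LinearMap.mem_ker]
  refine ⟨?_, ?_, ?_, ?_⟩
  · -- closedness
    subst hN
    have : (↑(⨅ i, LinearMap.ker (φ i : X →ₗ[𝕂] 𝕂)) : Set X) = ⋂ i, (LinearMap.ker (φ i : X →ₗ[𝕂] 𝕂) : Set X) := by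
      simp [Submodule.coe_iInf]
    rw [this]
    exact isClosed_iInter fun i => ContinuousLinearMap.isClosed_ker (φ i)
  · -- N ⊆ A
    intro x hx
    rw [hA]
    intro i
    have : φ i x = 0 := (hmemN x).1 hx i
    simpa [this] using hε
  · -- full rank
    -- consider L : X →ₗ (Fin n → 𝕂)
    set L : X →ₗ[𝕂] (Fin n → 𝕂) := LinearMap.pi fun i => (φ i).toLinearMap with hL
    have hker : LinearMap.ker L = N := by
      rw [hN, LinearMap.ker_pi]
    have hq : Module.rank 𝕂 (X ⧸ N) + Module.rank 𝕂 N = Module.rank 𝕂 X :=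
      Submodule.rank_quotient_add_rank N
    -- quotient is finite dimensional
    have hinj : Function.Injective (N.liftQ L hker.ge) := by
      rw [← LinearMap.ker_eq_bot, Submodule.ker_liftQ_eq_bot _ _ _ hker.le]
    have hfd : FiniteDimensional 𝕂 (X ⧸ N) :=
      FiniteDimensional.of_injective (N.liftQ L hker.ge) hinj
    have hqlt : Module.rank 𝕂 (X ⧸ N) < Cardinal.aleph0 := Module.rank_lt_aleph0 𝕂 _
    have hXinf : Cardinal.aleph0 ≤ Module.rank 𝕂 X := by
      by_contra h
      push_neg at h
      exact hinf (Module.rank_lt_aleph0_iff.mp h)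
    have hNinf : Cardinal.aleph0 ≤ Module.rank 𝕂 N := by
      by_contra h
      push_neg at h
      have : Module.rank 𝕂 X < Cardinal.aleph0 := by
        rw [← hq]
        exact Cardinal.add_lt_aleph0 hqlt h
      exact absurd this (not_lt.2 hXinf)
    calc Module.rank 𝕂 N = Module.rank 𝕂 (X ⧸ N) + Module.rank 𝕂 N :=
          (Cardinal.add_eq_right hNinf (hqlt.le.trans hNinf)).symm
      _ = Module.rank 𝕂 X := hq
  · -- every subspace inside A is inside N
    intro W hW _ x hx
    rw [hmemN]
    intro i
    by_contra h
    have hc : 0 < ‖φ i x‖ := norm_pos_iff.2 h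
    set t : 𝕂 := ((ε / ‖φ i x‖ : ℝ) : 𝕂) with ht
    have htx : t • x ∈ W := W.smul_mem t hx
    have := hW htx
    rw [hA] at this
    have hlt := this i
    have hnt : ‖t‖ = ε / ‖φ i x‖ := by
      rw [ht, RCLike.norm_ofReal, abs_of_pos (div_pos hε hc)]
    rw [map_smul, norm_smul, RCLike.norm_ofReal, abs_of_pos (div_pos hε hc),
      div_mul_cancel₀ _ (ne_of_gt hc)] at hlt
    exact lt_irrefl _ hlt
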